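/- Let π_ref and π_stu be fully supported probability distributions on a finite set Y, and for λ ∈ [0,1] let π_λ(y) ∝ π_ref(y)^{1−λ}·π_stu(y)^{λ}. Then the expected log-likelihood gap E_{y∼π_λ}[log π_ref(y) − log π_stu(y)] is nonincreasing in λ on [0,1]. -/

import Mathlib

open Real Finset

/-- Weighted Chebyshev-type inequality for antivarying functions. -/
lemma cheb_aux {Y : Type*} [Fintype Y] (μ g h : Y → ℝ) (hμ : ∀ y, 0 ≤ μ y)
    (hgh : ∀ y z, (g y - g z) * (h y - h z) ≤ 0) :
    (∑ y, μ y * (g y * h y)) * (∑ y, μ y) ≤ (∑ y, μ y * g y) * (∑ y, μ y * h y) := by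
  have expand : ∀ y z : Y, μ y * μ z * ((g y - g z) * (h y - h z))
      = ((μ y * (g y * h y)) * μ z - (μ y * g y) * (μ z * h z))
        + ((μ z * (g z * h z)) * μ y - (μ z * g z) * (μ y * h y)) := by
    intro y z; ring
  have key : ∑ y, ∑ z, μ y * μ z * ((g y - g z) * (h y - h z))
      = 2 * ((∑ y, μ y * (g y * h y)) * (∑ y, μ y)
           - (∑ y, μ y * g y) * (∑ y, μ y * h y)) := by
    simp_rw [expand, Finset.sum_add_distrib, Finset.sum_sub_distrib,
      ← Finset.mul_sum, ← Finset.sum_mul]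
    ring_nf
    simp_rw [mul_assoc, ← Finset.mul_sum]
    ring
  have hle : ∑ y, ∑ z, μ y * μ z * ((g y - g z) * (h y - h z)) ≤ 0 := by
    apply Finset.sum_nonpos; intro y _
    apply Finset.sum_nonpos; intro z _
    exact mul_nonpos_of_nonneg_of_nonpos (mul_nonneg (hμ y) (hμ z)) (hgh y z)
  nlinarith [key, hle]

theorem stmt_14 {Y : Type*} [Fintype Y] [Nonempty Y]
    (πref πstu : Y → ℝ)
    (href0 : ∀ y, 0 < πref y) (href1 : ∑ y, πref y = 1)
    (hstu0 : ∀ y, 0 < πstu y) (hstu1 : ∑ y, πstu y = 1)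
    (πt : ℝ → Y → ℝ)
    (hπt : ∀ lam y, πt lam y = (πref y) ^ (1 - lam) * (πstu y) ^ lam
        / ∑ y', (πref y') ^ (1 - lam) * (πstu y') ^ lam) :
    AntitoneOn (fun lam : ℝ =>
        ∑ y, πt lam y * (Real.log (πref y) - Real.log (πstu y)))
      (Set.Icc 0 1) := by
  intro a _ b hb hab
  set g : Y → ℝ := fun y => Real.log (πref y) - Real.log (πstu y) with hg
  set w : ℝ → Y → ℝ := fun lam y =>
    Real.exp ((1 - lam) * Real.log (πref y) + lam * Real.log (πstu y)) with hwdef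
  have hw : ∀ lam y, (πref y : ℝ) ^ (1 - lam) * (πstu y) ^ lam = w lam y := by
    intro lam y
    rw [Real.rpow_def_of_pos (href0 y), Real.rpow_def_of_pos (hstu0 y), ← Real.exp_add]
    congr 1; ring
  have hwpos : ∀ lam y, 0 < w lam y := fun lam y => Real.exp_pos _
  have hSpos : ∀ lam, 0 < ∑ y, w lam y :=
    fun lam => Finset.sum_pos (fun y _ => hwpos lam y) Finset.univ_nonempty
  have hf : ∀ lam, (∑ y, πt lam y * g y) = (∑ y, w lam y * g y) / (∑ y, w lam y) := by
    intro lam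
    rw [Finset.sum_div]
    apply Finset.sum_congr rfl
    intro y _
    rw [hπt lam y]
    simp_rw [hw]
    ring
  show ∑ y, πt b y * g y ≤ ∑ y, πt a y * g y
  simp only [hf]
  rw [div_le_div_iff₀ (hSpos b) (hSpos a)]
  -- w b y = w a y * h y with h y = exp (-(b-a) * g y)
  set h : Y → ℝ := fun y => Real.exp (-(b - a) * g y) with hhdef
  have hwb : ∀ y, w b y = w a y * h y := by
    intro y
    simp only [hwdef, hhdef, ← Real.exp_add, hg]
    congr 1; ring
  have hgh : ∀ y z, (g y - g z) * (h y - h z) ≤ 0 := by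
    intro y z
    rcases le_total (g y) (g z) with hle | hle
    · have h1 : h z ≤ h y := by
        simp only [hhdef]
        exact Real.exp_le_exp.mpr (by nlinarith)
      nlinarith
    · have h1 : h y ≤ h z := by
        simp only [hhdef]
        exact Real.exp_le_exp.mpr (by nlinarith)
      nlinarith
  have key := cheb_aux (w a) g h (fun y => (hwpos a y).le) hgh
  simp only [hwb]
  calc (∑ y, w a y * h y * g y) * ∑ y, w a y
      = (∑ y, w a y * (g y * h y)) * ∑ y, w a y := by
        congr 1; apply Finset.sum_congr rfl; intro y _; ring
    _ ≤ (∑ y, w a y * g y) * (∑ y, w a y * h y) := key
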